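/- (Gaussian mechanism satisfies zCDP) Let Q: 𝒳ⁿ → ℝ^m have ℓ₂-sensitivity Δ = max over neighboring D, D' of ‖Q(D) - Q(D')‖₂. For ρ > 0, the mechanism M(D) = Q(D) + N(0, (Δ²/(2ρ))·I_m) satisfies ρ-zCDP. -/

import Mathlib

open MeasureTheory

open RealInnerProductSpace

/-- The density of the Gaussian `N(μ, v·I_m)` on `ℝ^m`. -/
noncomputable def gaussPdf {m : ℕ} (μ : EuclideanSpace ℝ (Fin m)) (v : ℝ)
    (x : EuclideanSpace ℝ (Fin m)) : ℝ :=
  (2 * Real.pi * v) ^ (-(m : ℝ) / 2) * Real.exp (-‖x - μ‖ ^ 2 / (2 * v))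

/-- The `a`-Rényi divergence between two probability densities on `ℝ^m`. -/
noncomputable def renyiDivDensity {m : ℕ} (a : ℝ)
    (p q : EuclideanSpace ℝ (Fin m) → ℝ) : ℝ :=
  (a - 1)⁻¹ * Real.log (∫ x, p x ^ a * q x ^ (1 - a))

lemma gaussPdf_integral {m : ℕ} (μ : EuclideanSpace ℝ (Fin m)) (v : ℝ) (hv : 0 < v) :
    ∫ x, gaussPdf μ v x = 1 := by
  have h2v : (0:ℝ) < 2 * Real.pi * v := by positivity
  unfold gaussPdf
  rw [integral_const_mul]
  have : ∫ x : EuclideanSpace ℝ (Fin m), Real.exp (-‖x - μ‖ ^ 2 / (2 * v))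
      = ∫ x : EuclideanSpace ℝ (Fin m), Real.exp (-(1/(2*v)) * ‖x‖ ^ 2) := by
    rw [← integral_sub_right_eq_self
      (fun x : EuclideanSpace ℝ (Fin m) ↦ Real.exp (-(1/(2*v)) * ‖x‖ ^ 2)) μ]
    congr 1 with x
    ring_nf
  rw [this, GaussianFourier.integral_rexp_neg_mul_sq_norm (by positivity)]
  rw [finrank_euclideanSpace_fin]
  have : Real.pi / (1/(2*v)) = 2 * Real.pi * v := by field_simp
  rw [this, ← Real.rpow_add h2v]
  rw [neg_div, neg_add_cancel, Real.rpow_zero]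

lemma norm_identity {m : ℕ} (a : ℝ) (u w : EuclideanSpace ℝ (Fin m)) :
    a * ‖u + (1-a) • w‖^2 + (1-a) * ‖u - a • w‖^2 = ‖u‖^2 + a*(1-a)*‖w‖^2 := by
  have h1 : ‖u + (1-a) • w‖^2 = ‖u‖^2 + 2*((1-a)*⟪u, w⟫) + (1-a)^2*‖w‖^2 := by
    rw [norm_add_sq_real, real_inner_smul_right, norm_smul]
    rw [mul_pow, Real.norm_eq_abs, sq_abs]
  have h2 : ‖u - a • w‖^2 = ‖u‖^2 - 2*(a*⟪u, w⟫) + a^2*‖w‖^2 := by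
    rw [norm_sub_sq_real, real_inner_smul_right, norm_smul]
    rw [mul_pow, Real.norm_eq_abs, sq_abs]
  rw [h1, h2]; ring

lemma gaussPdf_prod {m : ℕ} (a v : ℝ) (hv : 0 < v) (μ μ' x : EuclideanSpace ℝ (Fin m)) :
    gaussPdf μ v x ^ a * gaussPdf μ' v x ^ (1-a)
      = Real.exp (a*(a-1)*‖μ-μ'‖^2/(2*v)) * gaussPdf (μ + (1-a) • (μ'-μ)) v x := by
  have hC : (0:ℝ) < (2 * Real.pi * v) ^ (-(m : ℝ) / 2) := by positivity
  unfold gaussPdf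
  set C := (2 * Real.pi * v) ^ (-(m : ℝ) / 2) with hCdef
  rw [Real.mul_rpow hC.le (Real.exp_pos _).le, Real.mul_rpow hC.le (Real.exp_pos _).le,
    ← Real.exp_mul, ← Real.exp_mul]
  have hCC : C ^ a * C ^ (1-a) = C := by
    rw [← Real.rpow_add hC]; norm_num
  have hexp : -‖x - μ‖ ^ 2 / (2 * v) * a + -‖x - μ'‖ ^ 2 / (2 * v) * (1-a)
      = a*(a-1)*‖μ-μ'‖^2/(2*v) + -‖x - (μ + (1-a) • (μ'-μ))‖ ^ 2 / (2 * v) := by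
    have key := norm_identity a (x - (μ + (1-a) • (μ'-μ))) (μ' - μ)
    have e1 : x - μ = (x - (μ + (1-a) • (μ'-μ))) + (1-a) • (μ' - μ) := by abel
    have e2 : x - μ' = (x - (μ + (1-a) • (μ'-μ))) - a • (μ' - μ) := by
      module
    have e3 : ‖μ - μ'‖ = ‖μ' - μ‖ := norm_sub_rev _ _
    rw [e1, e2, e3]
    linear_combination (-(1:ℝ)/(2*v)) * key
  calc C ^ a * Real.exp (-‖x - μ‖ ^ 2 / (2 * v) * a)
        * (C ^ (1-a) * Real.exp (-‖x - μ'‖ ^ 2 / (2 * v) * (1-a)))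
      = (C ^ a * C ^ (1-a))
          * Real.exp (-‖x - μ‖ ^ 2 / (2 * v) * a + -‖x - μ'‖ ^ 2 / (2 * v) * (1-a)) := by
        rw [Real.exp_add]; ring
    _ = _ := by rw [hCC, hexp, Real.exp_add]; ring

/-- The Gaussian mechanism satisfies `ρ`-zCDP: if `Q` has `ℓ₂`-sensitivity at
most `Δ` over neighboring datasets, then adding `N(0, (Δ²/(2ρ))·I_m)` noise to
`Q(D)` yields output distributions on neighboring datasets whose `a`-Rényi
divergence is at most `ρ·a` for all `a ∈ (1, ∞)`. -/
theorem gaussian_mechanism_zCDP {DS : Type*} {m : ℕ}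
    (neighbor : DS → DS → Prop) (Q : DS → EuclideanSpace ℝ (Fin m))
    (Δ : ℝ) (hΔ : 0 < Δ)
    (hsens : ∀ D D', neighbor D D' → ‖Q D - Q D'‖ ≤ Δ)
    (ρ : ℝ) (hρ : 0 < ρ) :
    ∀ D D', neighbor D D' → ∀ a : ℝ, 1 < a →
      renyiDivDensity a (gaussPdf (Q D) (Δ ^ 2 / (2 * ρ)))
        (gaussPdf (Q D') (Δ ^ 2 / (2 * ρ))) ≤ ρ * a := by
  intro D D' hN a ha
  have hv : (0:ℝ) < Δ ^ 2 / (2 * ρ) := by positivity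
  set v := Δ ^ 2 / (2 * ρ) with hvdef
  unfold renyiDivDensity
  simp_rw [gaussPdf_prod a v hv (Q D) (Q D'), integral_const_mul,
    gaussPdf_integral _ v hv, mul_one, Real.log_exp]
  have ha1 : a - 1 ≠ 0 := by linarith
  have ha0 : (0:ℝ) ≤ a := by linarith
  rw [show (a-1)⁻¹ * (a*(a-1)*‖Q D - Q D'‖^2/(2*v)) = a*‖Q D - Q D'‖^2/(2*v) from by
    field_simp]
  have hNb : ‖Q D - Q D'‖^2 ≤ Δ^2 := by
    nlinarith [hsens D D' hN, norm_nonneg (Q D - Q D')]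
  calc a*‖Q D - Q D'‖^2/(2*v) ≤ a*Δ^2/(2*v) := by gcongr
    _ = ρ * a := by
        rw [hvdef]; field_simp
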